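/- arXiv:2212.01655 — 6 statements merged into one kernel-verified Lean document; each statement's English description precedes it below -/
import Mathlib

section
/- Let V be a real Hilbert space, Vₙ a finite-dimensional subspace, W a finite-dimensional subspace with β(Vₙ, W) > 0. Then for every ω ∈ W, the affine set ω + W⊥ contains a unique element of minimal distance to Vₙ; more precisely, the map u ↦ dist(u, Vₙ) restricted to ω + W⊥ attains a unique minimizer. -/
theorem pbdw_unique_minimizer
    {V : Type*} [NormedAddCommGroup V] [InnerProductSpace ℝ V] [CompleteSpace V]
    (Vn W : Submodule ℝ V) [FiniteDimensional ℝ Vn] [FiniteDimensional ℝ W]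
    (hβ : 0 < ⨅ v : {v : Vn // v ≠ 0},
        ‖(Submodule.orthogonalProjectionOnto W ((v : Vn) : V) : V)‖ / ‖((v : Vn) : V)‖)
    (ω : V) (hω : ω ∈ W) :
    ∃! u : V, (u - ω ∈ Wᗮ) ∧
      ∀ x : V, x - ω ∈ Wᗮ →
        Metric.infDist u (Vn : Set V) ≤ Metric.infDist x (Vn : Set V) := by
  -- injectivity of P_W on Vn
  have hinj : ∀ v ∈ Vn, (Submodule.orthogonalProjectionOnto W v : V) = 0 → v = 0 := by
    intro v hv hpv
    by_contra hne
    have hb : BddBelow (Set.range fun v : {v : Vn // v ≠ 0} =>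
        ‖(Submodule.orthogonalProjectionOnto W ((v : Vn) : V) : V)‖ / ‖((v : Vn) : V)‖) := by
      refine ⟨0, ?_⟩
      rintro x ⟨y, rfl⟩
      positivity
    have hle := ciInf_le hb (⟨⟨v, hv⟩, by simpa using hne⟩ : {v : Vn // v ≠ 0})
    have := hβ.trans_le hle
    simp [hpv] at this
  set f : V →L[ℝ] V := W.subtypeL.comp (Submodule.orthogonalProjectionOnto W) with hf
  have hfapp : ∀ x : V, f x = (Submodule.orthogonalProjectionOnto W x : V) := fun x => rfl
  set T : Submodule ℝ V := Vn.map (f : V →ₗ[ℝ] V) with hT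
  haveI : FiniteDimensional ℝ T := Module.Finite.map Vn (f : V →ₗ[ℝ] V)
  set t : V := (Submodule.orthogonalProjectionOnto T ω : V) with ht
  obtain ⟨v₀, hv₀Vn, hv₀t⟩ : ∃ v₀ ∈ Vn, f v₀ = t :=
    Submodule.mem_map.mp (Submodule.orthogonalProjectionOnto T ω).2
  set m : ℝ := ‖ω - t‖ with hm
  -- infDist is achieved by projection onto Vn
  have hdist : ∀ x : V, Metric.infDist x (Vn : Set V)
      = ‖x - (Submodule.orthogonalProjectionOnto Vn x : V)‖ := by
    intro x
    rw [Metric.infDist_eq_iInf, ← Submodule.starProjection_apply, Submodule.starProjection_minimal]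
    simp [dist_eq_norm]
  -- m is a lower bound for ‖ω - f v‖
  have key1 : ∀ v ∈ Vn, m ≤ ‖ω - f v‖ := by
    intro v hv
    rw [hm, ht, ← Submodule.starProjection_apply, Submodule.starProjection_minimal]
    exact ciInf_le ⟨0, by rintro x ⟨y, rfl⟩; positivity⟩
      (⟨f v, Submodule.mem_map_of_mem hv⟩ : T)
  -- Pythagorean decomposition
  have key2 : ∀ x : V, x - ω ∈ Wᗮ → ∀ v : V,
      ‖x - v‖ ^ 2 = ‖ω - f v‖ ^ 2 + ‖(Submodule.orthogonalProjectionOnto Wᗮ (x - v) : V)‖ ^ 2 := by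
    intro x hx v
    have h1 := Submodule.norm_sq_eq_add_norm_sq_projection (x - v) W
    have hPx : (Submodule.orthogonalProjectionOnto W x : V) = ω := by
      have hz : Submodule.orthogonalProjectionOnto W (x - ω) = 0 :=
        Submodule.orthogonalProjectionOnto_apply_of_mem_orthogonal hx
      have hsub : Submodule.orthogonalProjectionOnto W x - Submodule.orthogonalProjectionOnto W ω = 0 := by
        rw [← map_sub]; exact hz
      have : Submodule.orthogonalProjectionOnto W x = Submodule.orthogonalProjectionOnto W ω := sub_eq_zero.mp hsub
      rw [this]
      exact Submodule.starProjection_eq_self_iff.mpr hω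
    have h2 : (Submodule.orthogonalProjectionOnto W (x - v) : V) = ω - f v := by
      rw [map_sub, Submodule.coe_sub, hPx, hfapp]
    have h3 : ‖Submodule.orthogonalProjectionOnto W (x - v)‖ = ‖ω - f v‖ := by
      rw [← h2]; rfl
    have h4 : ‖Submodule.orthogonalProjectionOnto Wᗮ (x - v)‖
        = ‖(Submodule.orthogonalProjectionOnto Wᗮ (x - v) : V)‖ := rfl
    rw [h3, h4] at h1
    exact h1
  -- lower bound for the objective on the feasible set
  have key3 : ∀ x : V, x - ω ∈ Wᗮ → m ≤ Metric.infDist x (Vn : Set V) := by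
    intro x hx
    rw [hdist x]
    have hv := Submodule.coe_mem (Submodule.orthogonalProjectionOnto Vn x)
    have h1 := key2 x hx (Submodule.orthogonalProjectionOnto Vn x : V)
    have h2 := key1 _ hv
    have h3 : (0:ℝ) ≤ ‖x - (Submodule.orthogonalProjectionOnto Vn x : V)‖ := norm_nonneg _
    have h4 : (0:ℝ) ≤ m := norm_nonneg _
    nlinarith [sq_nonneg ‖(Submodule.orthogonalProjectionOnto Wᗮ (x - (Submodule.orthogonalProjectionOnto Vn x : V)) : V)‖]
  -- the candidate minimizer
  have hcand : v₀ - f v₀ ∈ Wᗮ := Submodule.sub_starProjection_mem_orthogonal (K := W) v₀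
  refine ⟨ω + (v₀ - f v₀), ⟨by rw [add_sub_cancel_left]; exact hcand, ?_⟩, ?_⟩
  · intro x hx
    have h1 : Metric.infDist (ω + (v₀ - f v₀)) (Vn : Set V) ≤ m := by
      have := Metric.infDist_le_dist_of_mem (x := ω + (v₀ - f v₀)) hv₀Vn
      calc Metric.infDist (ω + (v₀ - f v₀)) (Vn : Set V) ≤ dist (ω + (v₀ - f v₀)) v₀ := this
        _ = m := by rw [dist_eq_norm, hm, ← hv₀t]; congr 1; abel
    exact h1.trans (key3 x hx)
  · rintro u ⟨hu1, hu2⟩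
    -- u achieves value m
    have hstar : (ω + (v₀ - f v₀)) - ω ∈ Wᗮ := by
      rw [add_sub_cancel_left]; exact hcand
    have hum : Metric.infDist u (Vn : Set V) = m := by
      refine le_antisymm ?_ (key3 u hu1)
      refine (hu2 _ hstar).trans ?_
      calc Metric.infDist (ω + (v₀ - f v₀)) (Vn : Set V) ≤ dist (ω + (v₀ - f v₀)) v₀ :=
            Metric.infDist_le_dist_of_mem hv₀Vn
        _ = m := by rw [dist_eq_norm, hm, ← hv₀t]; congr 1; abel
    set v : V := (Submodule.orthogonalProjectionOnto Vn u : V) with hvdef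
    have hvVn : v ∈ Vn := Submodule.coe_mem _
    have huv : ‖u - v‖ = m := by rw [← hum, hdist]
    have h1 := key2 u hu1 v
    have h2 := key1 v hvVn
    -- conclude the orthogonal part vanishes and ‖ω - f v‖ = m
    have hm0 : (0:ℝ) ≤ m := norm_nonneg _
    have h5 : ‖(Submodule.orthogonalProjectionOnto Wᗮ (u - v) : V)‖ = 0 := by
      refine le_antisymm ?_ (norm_nonneg _)
      nlinarith [norm_nonneg (ω - f v), norm_nonneg ((Submodule.orthogonalProjectionOnto Wᗮ (u - v) : V))]
    have h6 : ‖ω - f v‖ = m := by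
      refine le_antisymm ?_ h2
      nlinarith [norm_nonneg (ω - f v), norm_nonneg ((Submodule.orthogonalProjectionOnto Wᗮ (u - v) : V))]
    -- u - v ∈ W
    have h7 : u - v ∈ W := by
      have : Submodule.orthogonalProjectionOnto Wᗮ (u - v) = 0 := by
        ext; simpa using norm_eq_zero.mp h5
      have := Submodule.orthogonalProjectionOnto_eq_zero_iff.mp this
      rwa [Submodule.orthogonal_orthogonal] at this
    -- f v is the closest point in T to ω, hence equals t
    have h8 : f v = t := by
      have hmem : f v ∈ T := Submodule.mem_map_of_mem hvVn
      have hiInf : ‖ω - f v‖ = ⨅ w : T, ‖ω - w‖ := by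
        rw [h6, hm, ht, ← Submodule.starProjection_apply, Submodule.starProjection_minimal]
      have hperp := (Submodule.norm_eq_iInf_iff_inner_eq_zero T hmem).mp hiInf
      exact (Submodule.eq_starProjection_of_mem_of_inner_eq_zero hmem hperp).symm
    -- v = v₀
    have h9 : v = v₀ := by
      have hsub : v - v₀ ∈ Vn := Submodule.sub_mem _ hvVn hv₀Vn
      have : (Submodule.orthogonalProjectionOnto W (v - v₀) : V) = 0 := by
        rw [map_sub]
        push_cast
        rw [← hfapp, ← hfapp, h8, hv₀t]
        abel
      exact sub_eq_zero.mp (hinj _ hsub this)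
    -- conclude u equals the candidate
    have hWmem : u - (ω + (v₀ - f v₀)) ∈ W := by
      have heq : u - (ω + (v₀ - f v₀)) = (u - v) - (ω - f v₀) := by rw [h9]; abel
      rw [heq]
      exact Submodule.sub_mem _ h7
        (Submodule.sub_mem _ hω (by rw [hfapp]; exact Submodule.coe_mem _))
    have hWperp : u - (ω + (v₀ - f v₀)) ∈ Wᗮ := by
      have heq : u - (ω + (v₀ - f v₀)) = (u - ω) - (v₀ - f v₀) := by abel
      rw [heq]
      exact Submodule.sub_mem _ hu1 hcand
    have := Submodule.disjoint_def.mp W.orthogonal_disjoint _ hWmem hWperp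
    exact sub_eq_zero.mp this
end

section
/- Let V be a real Hilbert space, Vₙ ⊆ V a finite-dimensional subspace and W a finite-dimensional subspace with β := β(Vₙ, W) > 0. For any u ∈ V, let A(P_W u) denote the PBDW estimator, i.e., the minimizer over P_W u + W⊥ of the distance to Vₙ. Then ‖u − A(P_W u)‖ ≤ β⁻¹ · ‖u − P_{Vₙ} u‖. -/
open scoped RealInnerProductSpace
open Submodule

private lemma pbdw_inner_zero_of_min {V : Type*} [NormedAddCommGroup V]
    [InnerProductSpace ℝ V] (a b : V) (h : ∀ t : ℝ, ‖a‖ ≤ ‖a + t • b‖) :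
    ⟪a, b⟫ = 0 := by
  by_contra hc
  set c : ℝ := ⟪a, b⟫ with hcdef
  set d : ℝ := ‖b‖ ^ 2 + 1 with hddef
  have hd : (0 : ℝ) < d := by positivity
  have h1 := h (-c / d)
  have h2 : ‖a + (-c / d) • b‖ ^ 2
      = ‖a‖ ^ 2 + 2 * (-c / d) * c + (-c / d) ^ 2 * ‖b‖ ^ 2 := by
    rw [norm_add_sq_real, real_inner_smul_right, norm_smul, mul_pow, Real.norm_eq_abs,
      sq_abs]
    ring
  have h3 : ‖a‖ ^ 2 ≤ ‖a + (-c / d) • b‖ ^ 2 :=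
    pow_le_pow_left₀ (norm_nonneg _) h1 2
  rw [h2] at h3
  have h4 : 0 ≤ 2 * (-c / d) * c + (-c / d) ^ 2 * ‖b‖ ^ 2 := by linarith
  have hc2 : 0 < c ^ 2 := by positivity
  have hexp : 2 * (-c / d) * c + (-c / d) ^ 2 * ‖b‖ ^ 2
      = -(c ^ 2 / d ^ 2 * (‖b‖ ^ 2 + 2)) := by
    field_simp
    ring
  rw [hexp] at h4
  have hdd : 0 < c ^ 2 / d ^ 2 := by positivity
  have h6 : 0 < c ^ 2 / d ^ 2 * (‖b‖ ^ 2 + 2) := mul_pos hdd (by positivity)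
  linarith

private lemma pbdw_infDist_eq {V : Type*} [NormedAddCommGroup V]
    [InnerProductSpace ℝ V] (K : Submodule ℝ V) [HasOrthogonalProjection K] (x : V) :
    Metric.infDist x (K : Set V) = ‖x - (orthogonalProjection K x : V)‖ := by
  have hmin : ∀ y ∈ K, ‖x - (orthogonalProjection K x : V)‖ ≤ dist x y := by
    intro y hy
    rw [dist_eq_norm]
    have h1 : x - y = (x - (orthogonalProjection K x : V))
        + ((orthogonalProjection K x : V) - y) := by abel
    have h2 : ⟪x - (orthogonalProjection K x : V),
        (orthogonalProjection K x : V) - y⟫ = 0 :=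
      starProjection_inner_eq_zero x _ (K.sub_mem (orthogonalProjection K x).2 hy)
    have h3 : ‖x - y‖ ^ 2 = ‖x - (orthogonalProjection K x : V)‖ ^ 2
        + ‖(orthogonalProjection K x : V) - y‖ ^ 2 := by
      rw [h1, norm_add_sq_real, h2]; ring
    nlinarith [norm_nonneg (x - y), norm_nonneg (x - (orthogonalProjection K x : V)),
      sq_nonneg ‖(orthogonalProjection K x : V) - y‖]
  apply le_antisymm
  · have := Metric.infDist_le_dist_of_mem (x := x) (orthogonalProjection K x).2
    simpa [dist_eq_norm] using this
  · by_contra hlt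
    push_neg at hlt
    obtain ⟨y, hy, hdy⟩ := (Metric.infDist_lt_iff ⟨0, K.zero_mem⟩).mp hlt
    exact absurd (hmin y hy) (not_le.mpr hdy)

private lemma pbdw_key {V : Type*} [NormedAddCommGroup V] [InnerProductSpace ℝ V]
    (Vn W : Submodule ℝ V) [HasOrthogonalProjection Vn] [HasOrthogonalProjection W]
    (β : ℝ) (hβ0 : 0 < β) (hβ1 : β ≤ 1)
    (hβv : ∀ v : V, v ∈ Vn → β * ‖v‖ ≤ ‖(orthogonalProjection W v : V)‖)
    (e : V) (he : e ∈ Wᗮ) :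
    β * ‖e‖ ≤ ‖e - (orthogonalProjection Vn e : V)‖ := by
  set p : V := (orthogonalProjection Vn e : V) with hp
  set b : V := e - p with hb
  have hpVn : p ∈ Vn := (orthogonalProjection Vn e).2
  have hpb : ⟪p, b⟫ = 0 := by
    rw [real_inner_comm]
    exact starProjection_inner_eq_zero e p hpVn
  have hdec : e = p + b := by rw [hb]; abel
  have hpe : ⟪p, e⟫ = ‖p‖ ^ 2 := by
    rw [hdec, inner_add_right, hpb, real_inner_self_eq_norm_sq]
    ring
  have hPyth : ‖e‖ ^ 2 = ‖p‖ ^ 2 + ‖b‖ ^ 2 := by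
    have h := norm_add_sq_real p b
    rw [hpb] at h
    rw [hdec]; linarith
  rcases eq_or_ne p 0 with hp0 | hp0
  · have heb : ‖e‖ = ‖b‖ := by
      rw [hp0] at hPyth
      simp at hPyth
      nlinarith [norm_nonneg e, norm_nonneg b]
    rw [heb]
    nlinarith [norm_nonneg b]
  · set q : V := (orthogonalProjection W p : V) with hq
    have hqW : q ∈ W := (orthogonalProjection W p).2
    have hqe : ⟪q, e⟫ = 0 := he q hqW
    have h1 : ‖p‖ ^ 2 = ⟪p - q, e⟫ := by
      rw [inner_sub_left, hpe, hqe]; ring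
    have h2 : ⟪p - q, e⟫ ≤ ‖p - q‖ * ‖e‖ := real_inner_le_norm _ _
    have hpq : ⟪p - q, q⟫ = 0 := starProjection_inner_eq_zero p q hqW
    have h3 : ‖p - q‖ ^ 2 = ‖p‖ ^ 2 - ‖q‖ ^ 2 := by
      have hdec2 : p = (p - q) + q := by abel
      have hnorm : ‖p‖ ^ 2 = ‖p - q‖ ^ 2 + ‖q‖ ^ 2 := by
        calc ‖p‖ ^ 2 = ‖(p - q) + q‖ ^ 2 := by rw [← hdec2]
          _ = ‖p - q‖ ^ 2 + 2 * ⟪p - q, q⟫ + ‖q‖ ^ 2 := norm_add_sq_real _ _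
          _ = ‖p - q‖ ^ 2 + ‖q‖ ^ 2 := by rw [hpq]; ring
      linarith
    have h4 : β * ‖p‖ ≤ ‖q‖ := hβv p hpVn
    have hp' : (0:ℝ) < ‖p‖ := by simpa [norm_pos_iff] using hp0
    have h5 : ‖p‖ ^ 4 ≤ (‖p‖ ^ 2 - β ^ 2 * ‖p‖ ^ 2) * ‖e‖ ^ 2 := by
      have h6 : ‖p‖ ^ 2 ≤ ‖p - q‖ * ‖e‖ := by rw [h1]; exact h2
      have h7 : ‖p‖ ^ 4 ≤ ‖p - q‖ ^ 2 * ‖e‖ ^ 2 := by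
        nlinarith [norm_nonneg (p - q), norm_nonneg e, sq_nonneg ‖p‖]
      have h8 : β ^ 2 * ‖p‖ ^ 2 ≤ ‖q‖ ^ 2 := by
        nlinarith [norm_nonneg q, mul_nonneg hβ0.le (norm_nonneg p)]
      nlinarith [h7, h3, sq_nonneg ‖e‖]
    have h9 : ‖p‖ ^ 2 ≤ (1 - β ^ 2) * ‖e‖ ^ 2 := by
      have hpp : (0:ℝ) < ‖p‖ ^ 2 := by positivity
      have h5' : ‖p‖ ^ 2 * ‖p‖ ^ 2 ≤ ‖p‖ ^ 2 * ((1 - β ^ 2) * ‖e‖ ^ 2) := by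
        have hre : ‖p‖ ^ 2 * ((1 - β ^ 2) * ‖e‖ ^ 2)
            = (‖p‖ ^ 2 - β ^ 2 * ‖p‖ ^ 2) * ‖e‖ ^ 2 := by ring
        rw [hre]
        calc ‖p‖ ^ 2 * ‖p‖ ^ 2 = ‖p‖ ^ 4 := by ring
          _ ≤ _ := h5
      exact le_of_mul_le_mul_left h5' hpp
    have h10 : (β * ‖e‖) ^ 2 ≤ ‖b‖ ^ 2 := by
      have hx : (β * ‖e‖) ^ 2 = β ^ 2 * ‖e‖ ^ 2 := by ring
      rw [hx]
      nlinarith [hPyth, h9]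
    exact (abs_le_of_sq_le_sq' h10 (norm_nonneg b)).2

theorem pbdw_error_bound
    {V : Type*} [NormedAddCommGroup V] [InnerProductSpace ℝ V] [CompleteSpace V]
    (Vn W : Submodule ℝ V) [FiniteDimensional ℝ Vn] [FiniteDimensional ℝ W]
    (β : ℝ)
    (hβdef : β = ⨅ v : {v : Vn // v ≠ 0},
        ‖(Submodule.orthogonalProjection W ((v : Vn) : V) : V)‖ / ‖((v : Vn) : V)‖)
    (hβ : 0 < β)
    (A : W → V)
    (hA : ∀ ω : W, (A ω - (ω : V) ∈ Wᗮ) ∧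
      ∀ x : V, x - (ω : V) ∈ Wᗮ →
        Metric.infDist (A ω) (Vn : Set V) ≤ Metric.infDist x (Vn : Set V))
    (u : V) :
    ‖u - A (Submodule.orthogonalProjection W u)‖ ≤ β⁻¹ * ‖u - (Submodule.orthogonalProjection Vn u : V)‖ := by
  have hne : Nonempty {v : Vn // v ≠ 0} := by
    by_contra h
    rw [not_nonempty_iff] at h
    rw [hβdef, Real.iInf_of_isEmpty] at hβ
    exact lt_irrefl 0 hβ
  have hbdd : BddBelow (Set.range fun v : {v : Vn // v ≠ 0} =>
      ‖(orthogonalProjection W ((v : Vn) : V) : V)‖ / ‖((v : Vn) : V)‖) := by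
    refine ⟨0, ?_⟩
    rintro x ⟨i, rfl⟩
    positivity
  have hβv : ∀ v : V, v ∈ Vn → β * ‖v‖ ≤ ‖(orthogonalProjection W v : V)‖ := by
    intro v hv
    rcases eq_or_ne v 0 with rfl | hv0
    · simp
    · have hvs : (⟨v, hv⟩ : Vn) ≠ 0 := by
        simp [Submodule.mk_eq_zero, hv0]
      have hle : β ≤ ‖(orthogonalProjection W v : V)‖ / ‖v‖ := by
        rw [hβdef]
        exact ciInf_le hbdd ⟨⟨v, hv⟩, hvs⟩
      have hvn : (0:ℝ) < ‖v‖ := by simpa [norm_pos_iff] using hv0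
      rw [le_div_iff₀ hvn] at hle
      linarith
  have hβ1 : β ≤ 1 := by
    obtain ⟨⟨v, hv0⟩⟩ := hne
    have hv : ((v : Vn) : V) ≠ 0 := by
      simpa [Submodule.coe_eq_zero] using hv0
    have hvn : (0:ℝ) < ‖((v : Vn) : V)‖ := by simpa [norm_pos_iff] using hv
    have h2 : ‖(orthogonalProjection W ((v : Vn) : V) : V)‖ ≤ ‖((v : Vn) : V)‖ := by
      have hperp : ⟪(orthogonalProjection W ((v : Vn) : V) : V),
          ((v : Vn) : V) - (orthogonalProjection W ((v : Vn) : V) : V)⟫ = 0 := by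
        rw [real_inner_comm]
        exact starProjection_inner_eq_zero _ _ (orthogonalProjection W _).2
      have hn := norm_add_sq_real (orthogonalProjection W ((v : Vn) : V) : V)
        (((v : Vn) : V) - (orthogonalProjection W ((v : Vn) : V) : V))
      simp only [add_sub_cancel, hperp] at hn
      nlinarith [norm_nonneg ((v : Vn) : V),
        norm_nonneg (orthogonalProjection W ((v : Vn) : V) : V),
        sq_nonneg ‖((v : Vn) : V) - (orthogonalProjection W ((v : Vn) : V) : V)‖]
    calc β ≤ ‖(orthogonalProjection W ((v : Vn) : V) : V)‖ / ‖((v : Vn) : V)‖ := by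
              rw [hβdef]; exact ciInf_le hbdd ⟨v, hv0⟩
      _ ≤ 1 := by rw [div_le_one hvn]; exact h2
  obtain ⟨hAW, hAmin⟩ := hA (orthogonalProjection W u)
  set a : V := A (orthogonalProjection W u) with ha
  set e : V := u - a with he
  have heW : e ∈ Wᗮ := by
    have h1 : u - (orthogonalProjection W u : V) ∈ Wᗮ :=
      sub_starProjection_mem_orthogonal u
    have h2 : e = (u - (orthogonalProjection W u : V))
        - (a - (orthogonalProjection W u : V)) := by rw [he]; abel
    rw [h2]
    exact Submodule.sub_mem _ h1 hAW
  set r : V := a - (orthogonalProjection Vn a : V) with hr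
  set b : V := e - (orthogonalProjection Vn e : V) with hb
  have hopt : ∀ t : ℝ, ‖r‖ ≤ ‖r + t • b‖ := by
    intro t
    have hfeas : (a + t • e) - (orthogonalProjection W u : V) ∈ Wᗮ := by
      have h0 : (a + t • e) - (orthogonalProjection W u : V)
          = (a - (orthogonalProjection W u : V)) + t • e := by abel
      rw [h0]
      exact Submodule.add_mem _ hAW (Submodule.smul_mem _ t heW)
    have h1 := hAmin (a + t • e) hfeas
    rw [pbdw_infDist_eq, pbdw_infDist_eq] at h1
    have h2 : (a + t • e) - (orthogonalProjection Vn (a + t • e) : V) = r + t • b := by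
      rw [map_add, map_smul]
      push_cast
      rw [hr, hb]
      module
    rw [h2] at h1
    exact h1
  have hrb : ⟪r, b⟫ = 0 := pbdw_inner_zero_of_min r b hopt
  have hbu : ‖b‖ ≤ ‖u - (orthogonalProjection Vn u : V)‖ := by
    have h1 : u - (orthogonalProjection Vn u : V) = r + b := by
      have hu : u = a + e := by rw [he]; abel
      calc u - (orthogonalProjection Vn u : V)
          = (a + e) - (orthogonalProjection Vn (a + e) : V) := by rw [← hu]
        _ = r + b := by
            rw [map_add]
            push_cast
            rw [hr, hb]
            abel
    rw [h1]
    have h2 := norm_add_sq_real r b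
    rw [hrb] at h2
    nlinarith [norm_nonneg (r + b), norm_nonneg b, sq_nonneg ‖r‖]
  have hkey : β * ‖e‖ ≤ ‖b‖ := by
    rw [hb]
    exact pbdw_key Vn W β hβ hβ1 hβv e heW
  have hfinal : ‖e‖ ≤ β⁻¹ * ‖u - (orthogonalProjection Vn u : V)‖ := by
    have h1 : ‖e‖ = β⁻¹ * (β * ‖e‖) := by field_simp
    rw [h1]
    exact mul_le_mul_of_nonneg_left (le_trans hkey hbu) (by positivity)
  simpa [he, ha] using hfinal
end

section
/- Let V be a real Hilbert space, Vₙ and W finite-dimensional subspaces with β(Vₙ, W) > 0. The PBDW estimator satisfies the sharper bound ‖u − A(P_W u)‖ ≤ β(Vₙ, W)⁻¹ · dist(u, Vₙ ⊕ (W ∩ Vₙ⊥)) for every u ∈ V. -/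
open Metric

private lemma aux_infDist {V : Type*} [NormedAddCommGroup V] [InnerProductSpace ℝ V]
    (K : Submodule ℝ V) [K.HasOrthogonalProjection] (u : V) :
    Metric.infDist u (K : Set V) = ‖u - (Submodule.orthogonalProjection K u : V)‖ := by
  refine le_antisymm ?_ ?_
  · have h := Metric.infDist_le_dist_of_mem (x := u) (Submodule.orthogonalProjection K u).2
    rwa [dist_eq_norm] at h
  · rw [Metric.infDist_eq_iInf]
    refine le_ciInf fun y => ?_
    rw [dist_eq_norm, show (u - ((Submodule.orthogonalProjection K u : K) : V)) = u - K.starProjection u from rfl,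
      Submodule.starProjection_minimal]
    refine ciInf_le ⟨0, ?_⟩ (⟨(y : V), y.2⟩ : K)
    rintro z ⟨x, rfl⟩
    exact norm_nonneg _

private lemma aux_inner_zero {V : Type*} [NormedAddCommGroup V] [InnerProductSpace ℝ V]
    (p q : V) (h : ∀ t : ℝ, ‖p‖ ≤ ‖p + t • q‖) : (inner ℝ p q : ℝ) = 0 := by
  set a : ℝ := inner ℝ p q with ha
  set b : ℝ := ‖q‖ ^ 2 with hb
  have hb0 : 0 ≤ b := sq_nonneg _
  have key : ∀ t : ℝ, 0 ≤ 2 * t * a + t ^ 2 * b := by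
    intro t
    have h1 := h t
    have h2 : ‖p‖ ^ 2 ≤ ‖p + t • q‖ ^ 2 := by
      have := norm_nonneg p
      nlinarith
    rw [norm_add_sq_real, real_inner_smul_right, norm_smul, Real.norm_eq_abs, mul_pow,
      sq_abs] at h2
    nlinarith
  have hk := key (-a / (b + 1))
  have hb1 : (0:ℝ) < b + 1 := by linarith
  have h3 : 2 * (-a / (b + 1)) * a + (-a / (b + 1)) ^ 2 * b
      = a ^ 2 * (-(b + 2)) / (b + 1) ^ 2 := by
    field_simp
    ring
  rw [h3] at hk
  have h6 : a ^ 2 ≤ 0 := by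
    by_contra hcon
    push_neg at hcon
    have hneg : a ^ 2 * (-(b + 2)) / (b + 1) ^ 2 < 0 := by
      apply div_neg_of_neg_of_pos
      · nlinarith
      · positivity
    linarith
  have h7 : a ^ 2 = 0 := le_antisymm h6 (sq_nonneg a)
  exact pow_eq_zero_iff (two_ne_zero) |>.mp h7


private lemma aux_pyth {V : Type*} [NormedAddCommGroup V] [InnerProductSpace ℝ V]
    (K : Submodule ℝ V) [K.HasOrthogonalProjection] (x : V) :
    ‖x‖ ^ 2 = ‖(Submodule.orthogonalProjection K x : V)‖ ^ 2 + ‖x - Submodule.orthogonalProjection K x‖ ^ 2 := by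
  have hinner : (inner ℝ ((Submodule.orthogonalProjection K x : V)) (x - Submodule.orthogonalProjection K x) : ℝ) = 0 :=
    Submodule.inner_right_of_mem_orthogonal (Submodule.orthogonalProjection K x).2
      (Submodule.sub_starProjection_mem_orthogonal (K := K) x)
  have hx : x = (Submodule.orthogonalProjection K x : V) + (x - Submodule.orthogonalProjection K x) := by abel
  nth_rewrite 1 [hx]
  rw [norm_add_sq_real, hinner]
  ring

private lemma aux_sq_le {a c : ℝ} (ha : 0 ≤ a) (hc : 0 ≤ c) (h : a ^ 2 ≤ c ^ 2) : a ≤ c := by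
  nlinarith

set_option maxHeartbeats 1000000 in
theorem pbdw_error_bound_sharp
    {V : Type*} [NormedAddCommGroup V] [InnerProductSpace ℝ V] [CompleteSpace V]
    (Vn W : Submodule ℝ V) [FiniteDimensional ℝ Vn] [FiniteDimensional ℝ W]
    (β : ℝ)
    (hβdef : β = ⨅ v : {v : Vn // v ≠ 0},
        ‖(Submodule.orthogonalProjection W ((v : Vn) : V) : V)‖ / ‖((v : Vn) : V)‖)
    (hβ : 0 < β)
    (A : W → V)
    (hA : ∀ ω : W, (A ω - (ω : V) ∈ Wᗮ) ∧
      ∀ x : V, x - (ω : V) ∈ Wᗮ →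
        Metric.infDist (A ω) (Vn : Set V) ≤ Metric.infDist x (Vn : Set V))
    (u : V) :
    ‖u - A (Submodule.orthogonalProjection W u)‖ ≤
      β⁻¹ * Metric.infDist u ((Vn ⊔ (W ⊓ Vnᗮ) : Submodule ℝ V) : Set V) := by
  classical
  haveI hWV : FiniteDimensional ℝ (W ⊓ Vnᗮ : Submodule ℝ V) :=
    Submodule.finiteDimensional_of_le inf_le_left
  set Z : Submodule ℝ V := Vn ⊔ (W ⊓ Vnᗮ) with hZ
  haveI : FiniteDimensional ℝ Z := Submodule.finiteDimensional_sup _ _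
  set ω : W := Submodule.orthogonalProjection W u with hω
  set us : V := A ω with hus
  set e : V := u - us with he
  -- the error is W-orthogonal
  have heW : e ∈ Wᗮ := by
    have h1 := (hA ω).1
    have h2 : u - (ω : V) ∈ Wᗮ := Submodule.sub_starProjection_mem_orthogonal (K := W) u
    have h3 : e = (u - (ω : V)) - (A ω - (ω : V)) := by rw [he, hus]; abel
    rw [h3]; exact sub_mem h2 h1
  -- the estimator lies in Z
  have husZ : us ∈ Z := by
    set p0 : V := us - (Submodule.orthogonalProjection Vn us : V) with hp0
    have hp0o : p0 ∈ Vnᗮ := Submodule.sub_starProjection_mem_orthogonal (K := Vn) us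
    have hp0W : p0 ∈ W := by
      rw [← Submodule.orthogonal_orthogonal W, Submodule.mem_orthogonal]
      intro η hη
      have hmin : ∀ t : ℝ, ‖p0‖ ≤ ‖p0 + t • (η - (Submodule.orthogonalProjection Vn η : V))‖ := by
        intro t
        have hfeas : (us + t • η) - (ω : V) ∈ Wᗮ := by
          have h4 : (us + t • η) - (ω : V) = (A ω - (ω : V)) + t • η := by rw [hus]; abel
          rw [h4]; exact add_mem (hA ω).1 (Submodule.smul_mem _ _ hη)
        have h1 := (hA ω).2 (us + t • η) hfeas
        rw [aux_infDist] at h1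
        have hm : ((Submodule.orthogonalProjection Vn us : V) + t • (Submodule.orthogonalProjection Vn η : V))
            ∈ (Vn : Set V) :=
          add_mem (Submodule.orthogonalProjection Vn us).2
            (Submodule.smul_mem _ _ (Submodule.orthogonalProjection Vn η).2)
        have h2 := Metric.infDist_le_dist_of_mem (x := us + t • η) hm
        rw [dist_eq_norm] at h2
        have h5 : (us + t • η) - ((Submodule.orthogonalProjection Vn us : V)
            + t • (Submodule.orthogonalProjection Vn η : V))
            = p0 + t • (η - (Submodule.orthogonalProjection Vn η : V)) := by
          rw [hp0, smul_sub]; abel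
        rw [h5] at h2
        calc ‖p0‖ ≤ Metric.infDist (us + t • η) (Vn : Set V) := h1
          _ ≤ _ := h2
      have hz := aux_inner_zero p0 (η - (Submodule.orthogonalProjection Vn η : V)) hmin
      have h3 : (inner ℝ p0 ((Submodule.orthogonalProjection Vn η : V)) : ℝ) = 0 := by
        rw [real_inner_comm]
        exact Submodule.inner_right_of_mem_orthogonal (Submodule.orthogonalProjection Vn η).2 hp0o
      rw [inner_sub_right] at hz
      rw [real_inner_comm]
      linarith
    have h6 : us = (Submodule.orthogonalProjection Vn us : V) + p0 := by rw [hp0]; abel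
    rw [h6]
    exact Submodule.mem_sup.mpr ⟨_, (Submodule.orthogonalProjection Vn us).2, p0, ⟨hp0W, hp0o⟩, rfl⟩
  -- β facts
  haveI hne : Nonempty {v : Vn // v ≠ 0} := by
    by_contra hempty
    rw [not_nonempty_iff] at hempty
    rw [Real.iInf_of_isEmpty] at hβdef
    exact absurd hβdef (by linarith)
  have hbdd : BddBelow (Set.range fun v : {v : Vn // v ≠ 0} =>
      ‖(Submodule.orthogonalProjection W ((v : Vn) : V) : V)‖ / ‖((v : Vn) : V)‖) := by
    refine ⟨0, ?_⟩
    rintro x ⟨v, rfl⟩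
    positivity
  have hβle : ∀ v : V, v ∈ Vn → β * ‖v‖ ≤ ‖(Submodule.orthogonalProjection W v : V)‖ := by
    intro v hv
    by_cases hv0 : v = 0
    · simp [hv0]
    · have hvn : ((⟨v, hv⟩ : Vn)) ≠ 0 := fun hcon => hv0 (congrArg Subtype.val hcon)
      have h1 := hβdef ▸ ciInf_le hbdd (⟨⟨v, hv⟩, hvn⟩ : {v : Vn // v ≠ 0})
      have hvpos : (0:ℝ) < ‖v‖ := norm_pos_iff.mpr hv0
      rw [le_div_iff₀ hvpos] at h1
      exact h1
  have hβ1 : β ≤ 1 := by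
    obtain ⟨v⟩ := hne
    have hv0 : ((v : Vn) : V) ≠ 0 := fun hcon => v.2 (Subtype.ext hcon)
    have hvpos : (0:ℝ) < ‖((v : Vn) : V)‖ := norm_pos_iff.mpr hv0
    have h1 := hβdef ▸ ciInf_le hbdd v
    have h2 : ‖(Submodule.orthogonalProjection W ((v : Vn) : V) : V)‖ ≤ ‖((v : Vn) : V)‖ := by
      have := aux_pyth W ((v : Vn) : V)
      have := norm_nonneg (((v : Vn) : V) - Submodule.orthogonalProjection W ((v : Vn) : V))
      refine aux_sq_le (norm_nonneg _) (norm_nonneg _) ?_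
      nlinarith
    calc β ≤ _ := h1
      _ ≤ 1 := (div_le_one hvpos).mpr h2
  -- key inequality
  set p : V := (Submodule.orthogonalProjection Z e : V) with hp
  obtain ⟨v, hv, w, hw, hvw⟩ := Submodule.mem_sup.mp (Submodule.orthogonalProjection Z e).2
  rw [← hp] at hvw
  have hvwo : (inner ℝ v w : ℝ) = 0 := Submodule.inner_right_of_mem_orthogonal hv hw.2
  have hew : (inner ℝ e w : ℝ) = 0 := by
    rw [real_inner_comm]; exact Submodule.inner_right_of_mem_orthogonal hw.1 heW
  have hep : (inner ℝ e p : ℝ) = ‖p‖ ^ 2 := by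
    have h1 : (inner ℝ (e - p) p : ℝ) = 0 := by
      rw [real_inner_comm]
      exact Submodule.inner_right_of_mem_orthogonal (Submodule.orthogonalProjection Z e).2
        (Submodule.sub_starProjection_mem_orthogonal (K := Z) e)
    have h2 : (inner ℝ e p : ℝ) = inner ℝ (e - p) p + inner ℝ p p := by
      rw [← inner_add_left, sub_add_cancel]
    rw [h2, h1, real_inner_self_eq_norm_sq]; ring
  have hpv : ‖p‖ ^ 2 = (inner ℝ e v : ℝ) := by
    rw [← hep, ← hvw, inner_add_right, hew, add_zero]
  have hev : (inner ℝ e v : ℝ) = inner ℝ e (v - (Submodule.orthogonalProjection W v : V)) := by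
    have h1 : (inner ℝ e ((Submodule.orthogonalProjection W v : V)) : ℝ) = 0 := by
      rw [real_inner_comm]
      exact Submodule.inner_right_of_mem_orthogonal (Submodule.orthogonalProjection W v).2 heW
    rw [inner_sub_right, h1, sub_zero]
  have hcauchy : (inner ℝ e (v - (Submodule.orthogonalProjection W v : V)) : ℝ)
      ≤ ‖e‖ * ‖v - (Submodule.orthogonalProjection W v : V)‖ := real_inner_le_norm _ _
  have hpyW := aux_pyth W v
  have hβv := hβle v hv
  have hvp : ‖v‖ ^ 2 ≤ ‖p‖ ^ 2 := by
    have h1 : ‖p‖ ^ 2 = ‖v‖ ^ 2 + ‖w‖ ^ 2 := by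
      rw [← hvw, norm_add_sq_real, hvwo]; ring
    nlinarith [sq_nonneg ‖w‖]
  have hpyZ := aux_pyth Z e
  rw [← hp] at hpyZ
  have hkey : β * ‖e‖ ≤ ‖e - p‖ := by
    by_cases hp0 : p = 0
    · rw [hp0, sub_zero]
      nlinarith [norm_nonneg e]
    · have hppos : (0:ℝ) < ‖p‖ := norm_pos_iff.mpr hp0
      have h1 : ‖p‖ ^ 2 ≤ ‖e‖ * ‖v - (Submodule.orthogonalProjection W v : V)‖ := by
        rw [hpv, hev]; exact hcauchy
      have h1β : (0:ℝ) ≤ 1 - β ^ 2 := by nlinarith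
      have hsq : β ^ 2 * ‖v‖ ^ 2 ≤ ‖(Submodule.orthogonalProjection W v : V)‖ ^ 2 := by
        nlinarith [mul_le_mul hβv hβv (by positivity : (0:ℝ) ≤ β * ‖v‖) (norm_nonneg
          ((Submodule.orthogonalProjection W v : V)))]
      have h2 : ‖v - (Submodule.orthogonalProjection W v : V)‖ ^ 2 ≤ (1 - β ^ 2) * ‖p‖ ^ 2 := by
        nlinarith [mul_le_mul_of_nonneg_left hvp h1β]
      have h3 : ‖p‖ ^ 2 ≤ (1 - β ^ 2) * ‖e‖ ^ 2 := by
        nlinarith [norm_nonneg e, norm_nonneg (v - (Submodule.orthogonalProjection W v : V)),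
          mul_pos hppos hppos]
      refine aux_sq_le (by positivity) (norm_nonneg _) ?_
      nlinarith
  -- conclusion
  have hdist : Metric.infDist u (Z : Set V) = ‖e - p‖ := by
    rw [aux_infDist]
    have husZ' : (Submodule.orthogonalProjection Z us : V) = us := Submodule.starProjection_eq_self_iff (K := Z).mpr husZ
    have h1 : p = (Submodule.orthogonalProjection Z u : V) - us := by
      rw [hp, he, map_sub, Submodule.coe_sub, husZ']
    rw [h1, he]
    congr 1
    abel
  have hgoal : ‖e‖ ≤ β⁻¹ * ‖e - p‖ := by
    calc ‖e‖ = β⁻¹ * (β * ‖e‖) := by field_simp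
      _ ≤ β⁻¹ * ‖e - p‖ := by
        exact mul_le_mul_of_nonneg_left hkey (by positivity)
  rw [← hZ] at *
  calc ‖u - A ω‖ = ‖e‖ := by rw [he, hus]
    _ ≤ β⁻¹ * ‖e - p‖ := hgoal
    _ = β⁻¹ * Metric.infDist u (Z : Set V) := by rw [hdist]
end

section
/- Let V be a real Hilbert space, Vₙ and W finite-dimensional subspaces with β(Vₙ, W) > 0. The PBDW map A : W → V, sending ω to the unique minimizer over ω + W⊥ of the distance to Vₙ, is a bounded linear map, and its range is contained in Vₙ ⊕ (W ∩ Vₙ⊥). -/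
open RealInnerProductSpace

theorem pbdw_bounded_linear
    {V : Type*} [NormedAddCommGroup V] [InnerProductSpace ℝ V] [CompleteSpace V]
    (Vn W : Submodule ℝ V) [FiniteDimensional ℝ Vn] [FiniteDimensional ℝ W]
    (hβ : 0 < ⨅ v : {v : Vn // v ≠ 0},
        ‖(W.orthogonalProjection ((v : Vn) : V) : V)‖ / ‖((v : Vn) : V)‖)
    (A : W → V)
    (hA : ∀ ω : W, (A ω - (ω : V) ∈ Wᗮ) ∧
      ∀ x : V, x - (ω : V) ∈ Wᗮ →
        Metric.infDist (A ω) (Vn : Set V) ≤ Metric.infDist x (Vn : Set V)) :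
    (∃ B : W →L[ℝ] V, ∀ ω : W, B ω = A ω) ∧
      ∀ ω : W, A ω ∈ (Vn ⊔ (W ⊓ Vnᗮ) : Submodule ℝ V) := by
  classical
  set Pn : V →L[ℝ] V := Vn.subtypeL.comp (Vn.orthogonalProjection) with hPnDef
  have hPnmem : ∀ x : V, Pn x ∈ Vn := fun x => (Vn.orthogonalProjection x).2
  have hPerp : ∀ x : V, x - Pn x ∈ Vnᗮ := fun x =>
    Submodule.sub_starProjection_mem_orthogonal (K := Vn) x
  -- infDist to Vn equals norm of the orthogonal residual
  have hdist : ∀ x : V, Metric.infDist x (Vn : Set V) = ‖x - Pn x‖ := by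
    intro x
    refine le_antisymm ?_ ?_
    · calc Metric.infDist x (Vn : Set V) ≤ dist x (Pn x) :=
            Metric.infDist_le_dist_of_mem (hPnmem x)
        _ = ‖x - Pn x‖ := by rw [dist_eq_norm]
    · rw [Metric.infDist_eq_iInf]
      refine le_ciInf fun y => ?_
      rw [dist_eq_norm]
      have hxy : (x - y : V) = (x - Pn x) + (Pn x - y) := by abel
      have hperp : ⟪x - Pn x, (Pn x : V) - y⟫ = 0 := by
        rw [real_inner_comm]
        exact (hPerp x) _ (Vn.sub_mem (hPnmem x) y.2)
      have hsq : ‖(x - y : V)‖ ^ 2 = ‖x - Pn x‖ ^ 2 + ‖(Pn x : V) - y‖ ^ 2 := by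
        rw [hxy, norm_add_sq_real, hperp]; ring
      nlinarith [norm_nonneg ((x : V) - y), norm_nonneg (x - Pn x),
        sq_nonneg ‖(Pn x : V) - y‖]
  -- Vn ∩ Wᗮ = 0, from hβ
  have hcap : ∀ d : V, d ∈ Vn → d ∈ Wᗮ → d = 0 := by
    intro d hdVn hdW
    by_contra hd0
    have hv : (⟨d, hdVn⟩ : Vn) ≠ 0 := by
      simp only [ne_eq, Submodule.mk_eq_zero]; exact hd0
    have hbdd : BddBelow (Set.range fun v : {v : Vn // v ≠ 0} =>
        ‖(W.orthogonalProjection ((v : Vn) : V) : V)‖ / ‖((v : Vn) : V)‖) := by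
      refine ⟨0, ?_⟩
      rintro x ⟨v, rfl⟩
      positivity
    have hle := ciInf_le hbdd (⟨⟨d, hdVn⟩, hv⟩ : {v : Vn // v ≠ 0})
    have hproj : W.orthogonalProjection d = 0 :=
      Submodule.orthogonalProjectionOnto_eq_zero_iff.2 hdW
    rw [hproj] at hle
    simp at hle
    linarith [hβ.trans_le hle]
  -- the first-order characterization of A ω
  have hchar : ∀ ω : W, A ω - Pn (A ω) ∈ W := by
    intro ω
    obtain ⟨hmem, hmin⟩ := hA ω
    have hWcc : Wᗮᗮ = W := Submodule.orthogonal_orthogonal W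
    rw [← hWcc]
    intro z hz
    -- show ⟪z, A ω - Pn (A ω)⟫ = 0
    have key : ∀ t : ℝ, ‖A ω - Pn (A ω)‖ ^ 2 ≤
        ‖(A ω - Pn (A ω)) + t • (z - Pn z)‖ ^ 2 := by
      intro t
      have hx : (A ω + t • z) - (ω : V) ∈ Wᗮ := by
        have : (A ω + t • z) - (ω : V) = (A ω - (ω : V)) + t • z := by abel
        rw [this]
        exact Wᗮ.add_mem hmem (Wᗮ.smul_mem t hz)
      have h1 := hmin (A ω + t • z) hx
      rw [hdist, hdist] at h1
      have h2 : (A ω + t • z) - Pn (A ω + t • z)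
          = (A ω - Pn (A ω)) + t • (z - Pn z) := by
        simp only [map_add, map_smul]
        module
      rw [h2] at h1
      have := norm_nonneg (A ω - Pn (A ω))
      nlinarith [norm_nonneg ((A ω - Pn (A ω)) + t • (z - Pn z))]
    have hinner0 : ⟪A ω - Pn (A ω), z - Pn z⟫ = 0 := by
      set a := A ω - Pn (A ω) with ha
      set b := z - Pn z with hb
      by_cases hbz : b = 0
      · rw [hbz, inner_zero_right]
      · have hbpos : (0 : ℝ) < ‖b‖ ^ 2 := pow_pos (norm_pos_iff.mpr hbz) 2
        set c := ⟪a, b⟫ with hc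
        have hk := key (-(c / ‖b‖ ^ 2))
        rw [norm_add_sq_real, real_inner_smul_right, norm_smul] at hk
        simp only [norm_neg, Real.norm_eq_abs] at hk
        rw [mul_pow, sq_abs] at hk
        have : 0 ≤ 2 * (-(c / ‖b‖ ^ 2) * c) + (-(c / ‖b‖ ^ 2)) ^ 2 * ‖b‖ ^ 2 := by
          nlinarith
        have hexp : 2 * (-(c / ‖b‖ ^ 2) * c) + (-(c / ‖b‖ ^ 2)) ^ 2 * ‖b‖ ^ 2
            = -(c ^ 2 / ‖b‖ ^ 2) := by
          field_simp
          ring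
        rw [hexp] at this
        have : c ^ 2 ≤ 0 := by
          have h' := neg_nonneg.1 this
          calc c ^ 2 = (c ^ 2 / ‖b‖ ^ 2) * ‖b‖ ^ 2 := by field_simp
            _ ≤ 0 := mul_nonpos_of_nonpos_of_nonneg h' (le_of_lt hbpos)
        nlinarith [sq_nonneg c]
    have hPnz : ⟪A ω - Pn (A ω), (Pn z : V)⟫ = 0 := by
      rw [real_inner_comm]
      exact (hPerp (A ω)) _ (hPnmem z)
    have : ⟪A ω - Pn (A ω), z⟫ = 0 := by
      have hsplit : (z : V) = (z - Pn z) + Pn z := by abel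
      rw [hsplit, inner_add_right, hinner0, hPnz]; ring
    rw [real_inner_comm] at this
    exact this
  -- uniqueness of the minimizer given the characterization
  have huniq : ∀ (ω : W) (u₁ u₂ : V), u₁ - (ω : V) ∈ Wᗮ → u₁ - Pn u₁ ∈ W →
      u₂ - (ω : V) ∈ Wᗮ → u₂ - Pn u₂ ∈ W → u₁ = u₂ := by
    intro ω u₁ u₂ h1 h1' h2 h2'
    have hd : u₁ - u₂ ∈ Wᗮ := by
      have : u₁ - u₂ = (u₁ - (ω : V)) - (u₂ - (ω : V)) := by abel
      rw [this]; exact Wᗮ.sub_mem h1 h2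
    set d := u₁ - u₂ with hdDef
    have he : d - Pn d ∈ W := by
      have : d - Pn d = (u₁ - Pn u₁) - (u₂ - Pn u₂) := by
        simp only [hdDef, map_sub]; abel
      rw [this]; exact W.sub_mem h1' h2'
    have h1i : ⟪d - Pn d, d⟫ = 0 := hd _ he
    have h2i : ⟪d - Pn d, (Pn d : V)⟫ = 0 := by
      rw [real_inner_comm]
      exact (hPerp d) _ (hPnmem d)
    have h3i : ⟪d - Pn d, d - Pn d⟫ = 0 := by
      rw [inner_sub_right, h1i, h2i]; ring
    have he0 : d - Pn d = 0 := by
      have := inner_self_eq_zero (𝕜 := ℝ) (x := d - Pn d)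
      exact this.1 h3i
    have hdVn : d ∈ Vn := by
      have : d = Pn d := by
        have := sub_eq_zero.1 he0; exact this
      rw [this]; exact hPnmem d
    have : d = 0 := hcap d hdVn hd
    exact sub_eq_zero.1 this
  -- A is additive and homogeneous
  have hadd : ∀ ω₁ ω₂ : W, A (ω₁ + ω₂) = A ω₁ + A ω₂ := by
    intro ω₁ ω₂
    refine huniq (ω₁ + ω₂) _ _ (hA _).1 (hchar _) ?_ ?_
    · have : (A ω₁ + A ω₂) - ((ω₁ + ω₂ : W) : V)
          = (A ω₁ - (ω₁ : V)) + (A ω₂ - (ω₂ : V)) := by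
        push_cast; abel
      rw [this]; exact Wᗮ.add_mem (hA ω₁).1 (hA ω₂).1
    · have : (A ω₁ + A ω₂) - Pn (A ω₁ + A ω₂)
          = (A ω₁ - Pn (A ω₁)) + (A ω₂ - Pn (A ω₂)) := by
        simp only [map_add]; abel
      rw [this]; exact W.add_mem (hchar ω₁) (hchar ω₂)
  have hsmul : ∀ (c : ℝ) (ω : W), A (c • ω) = c • A ω := by
    intro c ω
    refine huniq (c • ω) _ _ (hA _).1 (hchar _) ?_ ?_
    · have : (c • A ω) - ((c • ω : W) : V) = c • (A ω - (ω : V)) := by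
        push_cast; rw [smul_sub]
      rw [this]; exact Wᗮ.smul_mem c (hA ω).1
    · have : (c • A ω) - Pn (c • A ω) = c • (A ω - Pn (A ω)) := by
        simp only [map_smul]; rw [smul_sub]
      rw [this]; exact W.smul_mem c (hchar ω)
  constructor
  · refine ⟨LinearMap.toContinuousLinearMap
      { toFun := A
        map_add' := hadd
        map_smul' := hsmul }, fun ω => rfl⟩
  · intro ω
    have : A ω = Pn (A ω) + (A ω - Pn (A ω)) := by abel
    rw [this]
    exact Submodule.add_mem _
      (Submodule.mem_sup_left (hPnmem (A ω)))
      (Submodule.mem_sup_right ⟨hchar ω, hPerp (A ω)⟩)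
end

section
/- Let V be a real Hilbert space, Vₙ, W finite-dimensional subspaces with β := β(Vₙ, W) > 0, and A the PBDW estimator. Suppose the true state u satisfies dist(u, M) ≤ ε_model for a set M with sup_{v ∈ M} dist(v, Vₙ) ≤ δₙ, and the observation is noisy: ω̃ = P_W u + η with ‖η‖ ≤ ε_noise. Then ‖u − A(ω̃)‖ ≤ β⁻¹ (δₙ + ε_noise + ε_model). -/
theorem pbdw_noise_model_error_bound
    {V : Type*} [NormedAddCommGroup V] [InnerProductSpace ℝ V] [CompleteSpace V]
    (Vn W : Submodule ℝ V) [FiniteDimensional ℝ Vn] [FiniteDimensional ℝ W]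
    (β : ℝ)
    (hβdef : β = ⨅ v : {v : Vn // v ≠ 0},
        ‖(W.orthogonalProjectionOnto ((v : Vn) : V) : V)‖ / ‖((v : Vn) : V)‖)
    (hβ : 0 < β)
    (A : W →L[ℝ] V)
    (hA1 : ∀ v : V, ‖v - A (W.orthogonalProjectionOnto v)‖ ≤
        β⁻¹ * Metric.infDist v (Vn : Set V))
    (hA2 : ∀ η : W, ‖A η‖ ≤ β⁻¹ * ‖(η : V)‖)
    (M : Set V) (hM : M.Nonempty)
    (δn ε_model ε_noise : ℝ)
    (hδ : ∀ v ∈ M, Metric.infDist v (Vn : Set V) ≤ δn)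
    (u : V) (hu : Metric.infDist u M ≤ ε_model)
    (η : W) (hη : ‖(η : V)‖ ≤ ε_noise) :
    ‖u - A (W.orthogonalProjectionOnto u + η)‖ ≤ β⁻¹ * (δn + ε_noise + ε_model) := by
  have hβinv : (0:ℝ) ≤ β⁻¹ := by positivity
  -- infDist u Vn ≤ δn + infDist u M
  have hkey : Metric.infDist u (Vn : Set V) ≤ δn + Metric.infDist u M := by
    by_contra h
    push_neg at h
    have h' : Metric.infDist u M < Metric.infDist u (Vn : Set V) - δn := by linarith
    obtain ⟨v, hvM, hv⟩ := (Metric.infDist_lt_iff hM).1 h'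
    have h1 : Metric.infDist u (Vn : Set V) ≤ Metric.infDist v (Vn : Set V) + dist u v :=
      Metric.infDist_le_infDist_add_dist
    have h2 := hδ v hvM
    linarith
  have hdist : Metric.infDist u (Vn : Set V) ≤ δn + ε_model := by linarith
  have h3 : u - A (W.orthogonalProjectionOnto u + η)
      = (u - A (W.orthogonalProjectionOnto u)) - A η := by
    rw [map_add]; abel
  calc ‖u - A (W.orthogonalProjectionOnto u + η)‖
      ≤ ‖u - A (W.orthogonalProjectionOnto u)‖ + ‖A η‖ := by rw [h3]; exact norm_sub_le _ _
    _ ≤ β⁻¹ * (δn + ε_model) + β⁻¹ * ε_noise := by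
        gcongr
        · exact (hA1 u).trans (by nlinarith [Metric.infDist_nonneg (x := u) (s := (Vn : Set V))])
        · exact (hA2 η).trans (by nlinarith)
    _ = β⁻¹ * (δn + ε_noise + ε_model) := by ring
end

section
/- Let V be a real Hilbert space, Vₙ, W finite-dimensional subspaces with β(Vₙ, W) > 0, and A the PBDW estimator. Then A is a left inverse of P_W on Vₙ ⊕ (W ∩ Vₙ⊥): for every v ∈ Vₙ ⊕ (W ∩ Vₙ⊥), A(P_W v) = v. In particular, PBDW reconstructs exactly every element of the reduced space Vₙ. -/
theorem pbdw_exact_on_reduced_space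
    {V : Type*} [NormedAddCommGroup V] [InnerProductSpace ℝ V] [CompleteSpace V]
    (Vn W : Submodule ℝ V) [FiniteDimensional ℝ Vn] [FiniteDimensional ℝ W]
    (hβ : 0 < ⨅ v : {v : Vn // v ≠ 0},
        ‖(W.orthogonalProjectionOnto ((v : Vn) : V) : V)‖ / ‖((v : Vn) : V)‖)
    (A : W → V)
    (hA : ∀ ω : W, (A ω - (ω : V) ∈ Wᗮ) ∧
      ∀ x : V, x - (ω : V) ∈ Wᗮ →
        Metric.infDist (A ω) (Vn : Set V) ≤ Metric.infDist x (Vn : Set V)) :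
    ∀ v ∈ (Vn ⊔ (W ⊓ Vnᗮ) : Submodule ℝ V), A (W.orthogonalProjectionOnto v) = v := by
  -- first: Vn ∩ Wᗮ = ⊥
  have hker : ∀ x : V, x ∈ Vn → x ∈ Wᗮ → x = 0 := by
    intro x hxVn hxW
    by_contra hx0
    have hxn : (⟨x, hxVn⟩ : Vn) ≠ 0 := by
      intro h; exact hx0 (by simpa using congrArg (Subtype.val) h)
    have hproj : W.orthogonalProjectionOnto x = 0 :=
      Submodule.orthogonalProjectionOnto_apply_of_mem_orthogonal hxW
    have hle : (⨅ v : {v : Vn // v ≠ 0},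
        ‖(W.orthogonalProjectionOnto ((v : Vn) : V) : V)‖ / ‖((v : Vn) : V)‖) ≤ 0 := by
      have : (⨅ v : {v : Vn // v ≠ 0},
          ‖(W.orthogonalProjectionOnto ((v : Vn) : V) : V)‖ / ‖((v : Vn) : V)‖) ≤
          ‖(W.orthogonalProjectionOnto x : V)‖ / ‖x‖ := by
        exact ciInf_le ⟨0, fun r ⟨v, hv⟩ => hv ▸ by positivity⟩
          (⟨⟨x, hxVn⟩, hxn⟩ : {v : Vn // v ≠ 0})
      simpa [hproj] using this
    linarith
  intro v hv
  obtain ⟨vn, hvn, w, hw, rfl⟩ := Submodule.mem_sup.mp hv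
  set u := A (W.orthogonalProjectionOnto (vn + w)) with hu
  obtain ⟨hfeas, hmin⟩ := hA (W.orthogonalProjectionOnto (vn + w))
  have hvfeas : (vn + w) - (W.orthogonalProjectionOnto (vn + w) : V) ∈ Wᗮ :=
    Submodule.sub_starProjection_mem_orthogonal (K := W) (vn + w)
  have he : u - (vn + w) ∈ Wᗮ := by
    have h := Wᗮ.sub_mem hfeas hvfeas
    have heq : u - (vn + w) = (u - (W.orthogonalProjectionOnto (vn + w) : V)) -
        ((vn + w) - (W.orthogonalProjectionOnto (vn + w) : V)) := by abel
    rw [heq]; exact h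
  set e := u - (vn + w) with hedef
  have hwW : w ∈ W := hw.1
  have hwVnp : w ∈ Vnᗮ := hw.2
  -- Q := orthogonal projection onto Vnᗮ
  -- Q u = w + Q e
  have hQu : (Submodule.orthogonalProjectionOnto Vnᗮ u : V) =
      w + (Submodule.orthogonalProjectionOnto Vnᗮ e : V) := by
    have huu : u = vn + w + e := by rw [hedef]; abel
    rw [huu, map_add, map_add]
    have h1 : Submodule.orthogonalProjectionOnto Vnᗮ vn = 0 :=
      Submodule.orthogonalProjectionOnto_apply_of_mem_orthogonal (Vn.le_orthogonal_orthogonal hvn)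
    have h2 : (Submodule.orthogonalProjectionOnto Vnᗮ w : V) = w :=
      Submodule.starProjection_eq_self_iff.mpr hwVnp
    simp [h1, h2]
  -- inner product of w and Q e is zero
  have hinner : (inner ℝ w ((Submodule.orthogonalProjectionOnto Vnᗮ e : V)) : ℝ) = 0 := by
    rw [show (Submodule.orthogonalProjectionOnto Vnᗮ e : V) = e - (Vn.orthogonalProjectionOnto e : V) from
        Submodule.starProjection_orthogonal_val (K := Vn) e, inner_sub_right]
    have h1 : (inner ℝ w e : ℝ) = 0 := he w hwW
    have h2 : (inner ℝ w ((Vn.orthogonalProjectionOnto e : V)) : ℝ) = 0 := by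
      rw [real_inner_comm]; exact hwVnp _ (Vn.orthogonalProjectionOnto e).2
    rw [h1, h2, sub_zero]
  -- norm bound on infDist from below
  have hlow : ‖(Submodule.orthogonalProjectionOnto Vnᗮ u : V)‖ ≤ Metric.infDist u (Vn : Set V) := by
    rw [Metric.infDist_eq_iInf]
    have : Nonempty (Vn : Set V) := ⟨⟨0, Vn.zero_mem⟩⟩
    apply le_ciInf
    rintro ⟨y, hy⟩
    have h1 : (Submodule.orthogonalProjectionOnto Vnᗮ (u - y) : V) = (Submodule.orthogonalProjectionOnto Vnᗮ u : V) := by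
      rw [map_sub]
      have : Submodule.orthogonalProjectionOnto Vnᗮ y = 0 :=
        Submodule.orthogonalProjectionOnto_apply_of_mem_orthogonal (Vn.le_orthogonal_orthogonal hy)
      simp [this]
    calc ‖(Submodule.orthogonalProjectionOnto Vnᗮ u : V)‖ = ‖(Submodule.orthogonalProjectionOnto Vnᗮ (u - y) : V)‖ := by
            rw [h1]
      _ ≤ ‖u - y‖ := by
            have := (Submodule.orthogonalProjectionOnto Vnᗮ).le_opNorm (u - y)
            calc ‖(Submodule.orthogonalProjectionOnto Vnᗮ (u - y) : V)‖
                = ‖Submodule.orthogonalProjectionOnto Vnᗮ (u - y)‖ := rfl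
              _ ≤ ‖(Submodule.orthogonalProjectionOnto Vnᗮ : V →L[ℝ] Vnᗮ)‖ * ‖u - y‖ := this
              _ ≤ 1 * ‖u - y‖ :=
                  mul_le_mul_of_nonneg_right (Submodule.orthogonalProjectionOnto_norm_le _) (norm_nonneg _)
              _ = ‖u - y‖ := one_mul _
      _ = dist u y := (dist_eq_norm u y).symm
      _ = dist u (⟨y, hy⟩ : (Vn : Set V)) := rfl
  -- upper bound: infDist u ≤ infDist (vn+w) ≤ ‖w‖
  have hup : Metric.infDist u (Vn : Set V) ≤ ‖w‖ := by
    refine le_trans (hmin _ hvfeas) ?_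
    have : Metric.infDist (vn + w) (Vn : Set V) ≤ dist (vn + w) vn :=
      Metric.infDist_le_dist_of_mem hvn
    simpa [dist_eq_norm] using this
  -- combine: ‖w + Qe‖² = ‖w‖² + ‖Qe‖² ≤ ‖w‖²
  have hpyth : ‖w + (Submodule.orthogonalProjectionOnto Vnᗮ e : V)‖ ^ 2 =
      ‖w‖ ^ 2 + ‖(Submodule.orthogonalProjectionOnto Vnᗮ e : V)‖ ^ 2 := by
    rw [norm_add_sq_real, hinner]; ring
  have hQe0 : (Submodule.orthogonalProjectionOnto Vnᗮ e : V) = 0 := by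
    have h1 : ‖w + (Submodule.orthogonalProjectionOnto Vnᗮ e : V)‖ ≤ ‖w‖ := by
      rw [← hQu]; exact hlow.trans hup
    have h2 : ‖w + (Submodule.orthogonalProjectionOnto Vnᗮ e : V)‖ ^ 2 ≤ ‖w‖ ^ 2 :=
      pow_le_pow_left₀ (norm_nonneg _) h1 2
    rw [hpyth] at h2
    have h3 : ‖(Submodule.orthogonalProjectionOnto Vnᗮ e : V)‖ = 0 := by
      nlinarith [norm_nonneg ((Submodule.orthogonalProjectionOnto Vnᗮ e : V))]
    exact norm_eq_zero.mp h3
  -- hence e ∈ Vn, and also e ∈ Wᗮ, so e = 0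
  have heVn : e ∈ Vn := by
    have h : (Submodule.orthogonalProjectionOnto Vnᗮ e : V) = e - (Vn.orthogonalProjectionOnto e : V) :=
      Submodule.starProjection_orthogonal_val (K := Vn) e
    rw [hQe0] at h
    have h2 : e = (Vn.orthogonalProjectionOnto e : V) := sub_eq_zero.mp h.symm
    rw [h2]; exact (Vn.orthogonalProjectionOnto e).2
  have he0 : e = 0 := hker e heVn he
  have hfin : u = vn + w := by
    rw [hedef] at he0; exact sub_eq_zero.mp he0
  simpa [hu] using hfin
end
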